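/- Let f : ℝ^d → ℝ be twice differentiable with L₂-Lipschitz continuous Hessian; fix x ∈ ℝ^d and define f̂(u) = f(x+u) - f(x) - ∇f(x)ᵀu. Suppose y, u ∈ ℝ^d with y ≠ u satisfy f̂(y) < f̂(u) + ∇f̂(u)ᵀ(y - u) - (γ/2)‖y - u‖², and suppose L₂(‖u‖ + ‖y‖) ≤ γ/2. Then (y-u)ᵀ∇²f(x)(y-u)/‖y-u‖² ≤ -γ/2. -/

import Mathlib

open scoped RealInnerProductSpace

set_option maxHeartbeats 1000000 in
/-- If the momentum difference certifies strong non-convexity of `f̂`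
and `L₂(‖u‖ + ‖y‖) ≤ γ/2`, then `y - u` is a negative-curvature direction of
`∇²f(x)` with Rayleigh quotient at most `-γ/2`. -/
theorem momentum_difference_is_nc {d : ℕ}
    (f : EuclideanSpace ℝ (Fin d) → ℝ)
    (g : EuclideanSpace ℝ (Fin d) → EuclideanSpace ℝ (Fin d))
    (H : EuclideanSpace ℝ (Fin d) → EuclideanSpace ℝ (Fin d) →L[ℝ] EuclideanSpace ℝ (Fin d))
    (L₂ γ : ℝ) (hL₂ : 0 < L₂) (hγ : 0 < γ)
    (hgrad : ∀ a, HasGradientAt f (g a) a)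
    (hhess : ∀ a, HasFDerivAt g (H a) a)
    (hlip : ∀ a b, ‖H a - H b‖ ≤ L₂ * ‖a - b‖)
    (x y u : EuclideanSpace ℝ (Fin d)) (hyu : y ≠ u)
    (hcond : (f (x + y) - f x - ⟪g x, y⟫)
      < (f (x + u) - f x - ⟪g x, u⟫) + ⟪g (x + u) - g x, y - u⟫
        - γ / 2 * ‖y - u‖ ^ 2)
    (hsmall : L₂ * (‖u‖ + ‖y‖) ≤ γ / 2) :
    ⟪H x (y - u), y - u⟫ / ‖y - u‖ ^ 2 ≤ -γ / 2 := by
  set v := y - u with hv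
  set a := x + u with ha
  have hvne : v ≠ 0 := sub_ne_zero.mpr hyu
  have hvpos : (0:ℝ) < ‖v‖ ^ 2 := pow_pos (norm_pos_iff.mpr hvne) 2
  set c : ℝ := ⟪H x v, v⟫ with hc
  set C : ℝ := L₂ * (‖u‖ + ‖y‖) * ‖v‖ ^ 2 with hC
  -- derivative of the line
  have hline : ∀ t : ℝ, HasDerivAt (fun t : ℝ => a + t • v) v t := fun t => by
    simpa using ((hasDerivAt_id t).smul_const v).const_add a
  -- derivative of f along the line
  have hφ : ∀ t : ℝ, HasDerivAt (fun t : ℝ => f (a + t • v)) ⟪g (a + t • v), v⟫ t := by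
    intro t
    have h1 := (hgrad (a + t • v)).hasFDerivAt.comp_hasDerivAt t (hline t)
    simp only [InnerProductSpace.toDual_apply_apply] at h1
    exact h1
  -- derivative of ⟪g ∘ line, v⟫
  have hgl : ∀ s : ℝ, HasDerivAt (fun s : ℝ => (⟪g (a + s • v), v⟫ : ℝ))
      ⟪H (a + s • v) v, v⟫ s := by
    intro s
    have h1 : HasDerivAt (fun s : ℝ => g (a + s • v)) (H (a + s • v) v) s :=
      (hhess (a + s • v)).comp_hasDerivAt s (hline s)
    simpa [real_inner_comm] using (HasDerivAt.inner ℝ h1 (hasDerivAt_const s v))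
  -- Hessian lower bound along the segment
  have hHb : ∀ s ∈ Set.Icc (0:ℝ) 1, c - C ≤ ⟪H (a + s • v) v, v⟫ := by
    intro s hs
    obtain ⟨hs0, hs1⟩ := hs
    have hdist : ‖x - (a + s • v)‖ ≤ ‖u‖ + ‖y‖ := by
      have heq : x - (a + s • v) = -((1 - s) • u + s • y) := by
        rw [ha, hv]; module
      rw [heq, norm_neg]
      calc ‖(1 - s) • u + s • y‖ ≤ ‖(1 - s) • u‖ + ‖s • y‖ := norm_add_le _ _
        _ = (1 - s) * ‖u‖ + s * ‖y‖ := by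
            rw [norm_smul, norm_smul, Real.norm_of_nonneg (by linarith),
              Real.norm_of_nonneg hs0]
        _ ≤ ‖u‖ + ‖y‖ := by nlinarith [norm_nonneg u, norm_nonneg y]
    have h1 : c - ⟪H (a + s • v) v, v⟫ = ⟪(H x - H (a + s • v)) v, v⟫ := by
      simp [hc, ContinuousLinearMap.sub_apply, inner_sub_left]
    have h2 : (⟪(H x - H (a + s • v)) v, v⟫ : ℝ) ≤ ‖H x - H (a + s • v)‖ * ‖v‖ * ‖v‖ :=
      calc (⟪(H x - H (a + s • v)) v, v⟫ : ℝ) ≤ ‖(H x - H (a + s • v)) v‖ * ‖v‖ :=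
            real_inner_le_norm _ _
        _ ≤ ‖H x - H (a + s • v)‖ * ‖v‖ * ‖v‖ := by
            have := (H x - H (a + s • v)).le_opNorm v
            nlinarith [norm_nonneg v]
    have h3 := hlip x (a + s • v)
    have h4 : ‖H x - H (a + s • v)‖ * ‖v‖ * ‖v‖ ≤ C := by
      rw [hC]
      have hn := norm_nonneg (H x - H (a + s • v))
      nlinarith [norm_nonneg v, mul_le_mul_of_nonneg_left hdist hL₂.le]
    linarith [h1 ▸ (h2.trans h4)]
  -- first monotonicity: gradient inner product
  have hχ : ∀ s : ℝ, HasDerivAt (fun s : ℝ => (⟪g (a + s • v), v⟫ : ℝ) - s * (c - C))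
      (⟪H (a + s • v) v, v⟫ - (c - C)) s := fun s => by
    exact ((hgl s).sub ((hasDerivAt_id s).mul_const (c - C))).congr_deriv (by ring)
  have hmonoχ : MonotoneOn (fun s : ℝ => (⟪g (a + s • v), v⟫ : ℝ) - s * (c - C))
      (Set.Icc 0 1) := by
    apply monotoneOn_of_deriv_nonneg (convex_Icc 0 1)
    · exact fun s _ => (hχ s).continuousAt.continuousWithinAt
    · exact fun s _ => (hχ s).differentiableAt.differentiableWithinAt
    · intro s hs
      rw [(hχ s).deriv]
      rw [interior_Icc] at hs
      have := hHb s ⟨hs.1.le, hs.2.le⟩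
      linarith
  have hgb : ∀ t ∈ Set.Icc (0:ℝ) 1, (⟪g a, v⟫ : ℝ) + t * (c - C) ≤ ⟪g (a + t • v), v⟫ := by
    intro t ht
    have := hmonoχ (Set.left_mem_Icc.mpr zero_le_one) ht ht.1
    simp only [zero_smul, add_zero, zero_mul, sub_zero] at this
    linarith
  -- second monotonicity: function values
  have hψ : ∀ t : ℝ, HasDerivAt
      (fun t : ℝ => f (a + t • v) - t * ⟪g a, v⟫ - t ^ 2 / 2 * (c - C))
      (⟪g (a + t • v), v⟫ - ⟪g a, v⟫ - t * (c - C)) t := by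
    intro t
    have h2 : HasDerivAt (fun t : ℝ => t ^ 2 / 2 * (c - C)) (t * (c - C)) t := by
      have := (hasDerivAt_pow 2 t).div_const 2 |>.mul_const (c - C)
      exact this.congr_deriv (by ring)
    exact (((hφ t).sub ((hasDerivAt_id t).mul_const (⟪g a, v⟫ : ℝ))).sub h2).congr_deriv (by ring)
  have hmonoψ : MonotoneOn
      (fun t : ℝ => f (a + t • v) - t * ⟪g a, v⟫ - t ^ 2 / 2 * (c - C)) (Set.Icc 0 1) := by
    apply monotoneOn_of_deriv_nonneg (convex_Icc 0 1)
    · exact fun t _ => (hψ t).continuousAt.continuousWithinAt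
    · exact fun t _ => (hψ t).differentiableAt.differentiableWithinAt
    · intro t ht
      rw [(hψ t).deriv]
      rw [interior_Icc] at ht
      have := hgb t ⟨ht.1.le, ht.2.le⟩
      linarith
  have hkey : f a + ⟪g a, v⟫ + (c - C) / 2 ≤ f (a + v) := by
    have := hmonoψ (Set.left_mem_Icc.mpr zero_le_one) (Set.right_mem_Icc.mpr zero_le_one)
      zero_le_one
    simp only [zero_smul, add_zero, zero_mul, sub_zero, one_smul, one_mul, one_pow] at this
    linarith
  -- rewrite hcond
  have hxy : a + v = x + y := by rw [ha, hv]; abel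
  have hcond' : f (a + v) - f a - ⟪g a, v⟫ < -(γ / 2) * ‖v‖ ^ 2 := by
    rw [hxy]
    have e1 : (⟪g a - g x, v⟫ : ℝ) = ⟪g a, v⟫ - ⟪g x, v⟫ := by rw [inner_sub_left]
    have e2 : (⟪g x, v⟫ : ℝ) = ⟪g x, y⟫ - ⟪g x, u⟫ := by rw [hv, inner_sub_right]
    linarith [hcond]
  have hCb : C ≤ γ / 2 * ‖v‖ ^ 2 := by
    rw [hC]
    nlinarith [sq_nonneg ‖v‖]
  have hcb : c ≤ -(γ / 2) * ‖v‖ ^ 2 := by linarith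
  rw [div_le_iff₀ hvpos]
  calc c ≤ -(γ / 2) * ‖v‖ ^ 2 := hcb
    _ = -γ / 2 * ‖v‖ ^ 2 := by ring
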